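/- Let $(e_i)_{i \in \mathbb{N}}$ be square-integrable random variables adapted to a filtration $(\mathcal{F}_i)_{i \ge 0}$ with $E(e_i \mid \mathcal{F}_{i-1}) = 0$ a.s. and $\sup_i E(e_i^2 \mid \mathcal{F}_{i-1}) < \infty$ a.s. Let $(Z_i)_{i \in \mathbb{N}}$ be square-integrable random variables such that $Z_i$ is $\mathcal{F}_{i-1}$-measurable for each $i$ and $\sup_i |Z_i| < \infty$ a.s. Then $\frac{1}{n}\sum_{i=1}^n Z_i e_i \to 0$ almost surely. -/

import Mathlib

open MeasureTheory Filter Topology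
open scoped ENNReal NNReal


lemma kronecker_aux (a : ℕ → ℝ) (n : ℕ) :
    ∑ i ∈ Finset.Icc 1 n, a i = n * (∑ i ∈ Finset.Icc 1 n, a i / i)
      - ∑ k ∈ Finset.range n, (∑ i ∈ Finset.Icc 1 k, a i / i) := by
  induction n with
  | zero => simp
  | succ n ih =>
      rw [Finset.sum_Icc_succ_top (by omega : 1 ≤ n + 1),
        Finset.sum_Icc_succ_top (by omega : 1 ≤ n + 1), Finset.sum_range_succ, ih]
      have h : ((n:ℝ) + 1) ≠ 0 := by positivity
      push_cast
      field_simp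
      ring

lemma kronecker (a : ℕ → ℝ) (c : ℝ)
    (h : Tendsto (fun n => ∑ i ∈ Finset.Icc 1 n, a i / i) atTop (𝓝 c)) :
    Tendsto (fun n : ℕ => (1 / (n : ℝ)) * ∑ i ∈ Finset.Icc 1 n, a i) atTop (𝓝 0) := by
  have hc := h.cesaro
  have := h.sub hc
  rw [sub_self] at this
  refine this.congr' ?_
  filter_upwards [eventually_ge_atTop 1] with n hn
  have hn' : (n:ℝ) ≠ 0 := by positivity
  rw [kronecker_aux a n, mul_sub, one_div, inv_mul_cancel_left₀ hn']


lemma mul_integrable {Ω : Type*} {m : MeasurableSpace Ω} {μ : Measure Ω} {f g : Ω → ℝ}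
    (hf : MemLp f 2 μ) (hg : MemLp g 2 μ) : Integrable (fun ω => f ω * g ω) μ := by
  have h := (((hf.add hg).integrable_sq.sub hf.integrable_sq).sub hg.integrable_sq).div_const 2
  refine h.congr (Filter.Eventually.of_forall fun ω => ?_)
  simp only [Pi.add_apply, Pi.sub_apply]
  ring

lemma key {Ω : Type*} {m : MeasurableSpace Ω} (μ : Measure Ω) [IsProbabilityMeasure μ]
    (ℱ : ℕ → MeasurableSpace Ω) (hmono : Monotone ℱ) (hle : ∀ i, ℱ i ≤ m)
    (e Z : ℕ → Ω → ℝ)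
    (hadapt : ∀ i, 1 ≤ i → StronglyMeasurable[ℱ i] (e i))
    (hL2 : ∀ i, 1 ≤ i → MemLp (e i) 2 μ)
    (hmds : ∀ i, 1 ≤ i → μ[e i | ℱ (i - 1)] =ᵐ[μ] 0)
    (hZmeas : ∀ i, 1 ≤ i → StronglyMeasurable[ℱ (i - 1)] (Z i))
    (K : ℕ) :
    ∀ᵐ ω ∂μ, ((∀ i, (μ[(e (i + 1)) ^ 2 | ℱ i]) ω ≤ (K:ℝ)) ∧ (∀ i, |Z i ω| ≤ (K:ℝ))) →
      ∃ c, Tendsto (fun n : ℕ => ∑ i ∈ Finset.Icc 1 n, Z i ω * e i ω / i) atTop (𝓝 c) := by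
  -- the truncation sets
  set V : ℕ → Ω → ℝ := fun j => μ[(e (j + 1)) ^ 2 | ℱ j] with hV
  set S : ℕ → Set Ω := fun i =>
    {ω | (∀ j, 1 ≤ j → j ≤ i → |Z j ω| ≤ (K:ℝ)) ∧ (∀ j, j < i → V j ω ≤ (K:ℝ))} with hS
  set ξ : ℕ → Ω → ℝ := fun i => (S i).indicator (fun _ => (1:ℝ)) with hξ
  set g : ℕ → Ω → ℝ := fun i ω => ξ i ω * Z i ω with hg
  set d : ℕ → Ω → ℝ := fun i ω => (i : ℝ)⁻¹ * (g i ω * e i ω) with hd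
  set M : ℕ → Ω → ℝ := fun n ω => ∑ i ∈ Finset.Icc 1 n, d i ω with hM
  set F : Filtration ℕ m := ⟨ℱ, hmono, hle⟩ with hF
  -- measurability of the sets S
  have hSmeas : ∀ i, 1 ≤ i → MeasurableSet[ℱ (i - 1)] (S i) := by
    intro i hi
    have hrw : S i = (⋂ j ∈ Finset.Icc 1 i, {ω | |Z j ω| ≤ (K:ℝ)}) ∩
        ⋂ j ∈ Finset.range i, {ω | V j ω ≤ (K:ℝ)} := by
      ext ω
      simp only [hS, Set.mem_setOf_eq, Set.mem_inter_iff, Set.mem_iInter, Finset.mem_Icc,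
        Finset.mem_range]
      constructor
      · rintro ⟨h1, h2⟩; exact ⟨fun j hj => h1 j hj.1 hj.2, fun j hj => h2 j hj⟩
      · rintro ⟨h1, h2⟩; exact ⟨fun j hj1 hj2 => h1 j ⟨hj1, hj2⟩, fun j hj => h2 j hj⟩
    rw [hrw]
    refine MeasurableSet.inter ?_ ?_
    · refine Finset.measurableSet_biInter _ fun j hj => ?_
      rw [Finset.mem_Icc] at hj
      have hZj : StronglyMeasurable[ℱ (i - 1)] (Z j) :=
        (hZmeas j hj.1).mono (hmono (by omega : j - 1 ≤ i - 1))
      letI : MeasurableSpace Ω := ℱ (i - 1)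
      exact hZj.measurable.abs measurableSet_Iic
    · refine Finset.measurableSet_biInter _ fun j hj => ?_
      rw [Finset.mem_range] at hj
      have hVj : StronglyMeasurable[ℱ (i - 1)] (V j) :=
        (stronglyMeasurable_condExp).mono (hmono (by omega : j ≤ i - 1))
      exact hVj.measurable measurableSet_Iic
  -- ξ properties
  have hξmeas : ∀ i, 1 ≤ i → StronglyMeasurable[ℱ (i - 1)] (ξ i) := fun i hi =>
    stronglyMeasurable_const.indicator (hSmeas i hi)
  have hξ01 : ∀ i ω, ξ i ω = 0 ∨ ξ i ω = 1 := by
    intro i ω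
    by_cases h : ω ∈ S i
    · right; simp [hξ, Set.indicator_of_mem h]
    · left; simp [hξ, Set.indicator_of_notMem h]
  -- g properties
  have hgmeas : ∀ i, 1 ≤ i → StronglyMeasurable[ℱ (i - 1)] (g i) := fun i hi =>
    (hξmeas i hi).mul (hZmeas i hi)
  have hgbdd : ∀ i, 1 ≤ i → ∀ ω, |g i ω| ≤ (K:ℝ) := by
    intro i hi ω
    by_cases h : ω ∈ S i
    · simp only [hg, hξ, Set.indicator_of_mem h, one_mul]
      exact h.1 i hi le_rfl
    · simp [hg, hξ, Set.indicator_of_notMem h]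
  -- d properties
  have hdmeas : ∀ i, 1 ≤ i → StronglyMeasurable[ℱ i] (d i) := fun i hi =>
    (((hgmeas i hi).mono (hmono (by omega))).mul (hadapt i hi)).const_mul _
  have hdL2 : ∀ i, 1 ≤ i → MemLp (d i) 2 μ := by
    intro i hi
    refine MemLp.of_le ((hL2 i hi).const_mul (K:ℝ))
      ((hdmeas i hi).mono (hle i)).aestronglyMeasurable
      (Filter.Eventually.of_forall fun ω => ?_)
    have h1 : |(i:ℝ)⁻¹| ≤ 1 := by
      rw [abs_of_nonneg (by positivity)]
      exact inv_le_one_of_one_le₀ (Nat.one_le_cast.2 hi)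
    calc ‖d i ω‖ = |(i:ℝ)⁻¹| * (|g i ω| * |e i ω|) := by
          simp only [hd, Real.norm_eq_abs, abs_mul]
      _ ≤ 1 * ((K:ℝ) * |e i ω|) :=
          mul_le_mul h1 (mul_le_mul_of_nonneg_right (hgbdd i hi ω) (abs_nonneg _))
            (by positivity) zero_le_one
      _ = ‖(K:ℝ) * e i ω‖ := by
          simp [Real.norm_eq_abs, abs_mul, abs_of_nonneg (by positivity : (0:ℝ) ≤ (K:ℝ))]
  have hdint : ∀ i, 1 ≤ i → Integrable (d i) μ := fun i hi =>
    (hdL2 i hi).integrable one_le_two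
  -- conditional expectation of increments is zero
  have hcd : ∀ n : ℕ, μ[d (n + 1) | ℱ n] =ᵐ[μ] 0 := by
    intro n
    have hg1 : StronglyMeasurable[ℱ n] (g (n + 1)) := by
      simpa using hgmeas (n + 1) (by omega)
    have he1 : Integrable (e (n + 1)) μ := (hL2 (n + 1) (by omega)).integrable one_le_two
    have hfg : Integrable (g (n + 1) * e (n + 1)) μ :=
      he1.bdd_mul ((hg1.mono (hle n)).aestronglyMeasurable)
        (Filter.Eventually.of_forall fun ω => by
          simpa [Real.norm_eq_abs] using hgbdd (n + 1) (by omega) ω)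
    have hpull : μ[g (n + 1) * e (n + 1) | ℱ n] =ᵐ[μ] g (n + 1) * μ[e (n + 1) | ℱ n] :=
      condExp_mul_of_stronglyMeasurable_left hg1 hfg he1
    have hzero : μ[e (n + 1) | ℱ n] =ᵐ[μ] 0 := by simpa using hmds (n + 1) (by omega)
    have hdeq : d (n + 1) = ((n + 1 : ℕ) : ℝ)⁻¹ • (g (n + 1) * e (n + 1)) := rfl
    rw [hdeq]
    calc μ[((n + 1 : ℕ) : ℝ)⁻¹ • (g (n + 1) * e (n + 1)) | ℱ n]
        =ᵐ[μ] ((n + 1 : ℕ) : ℝ)⁻¹ • μ[g (n + 1) * e (n + 1) | ℱ n] := condExp_smul _ _ _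
      _ =ᵐ[μ] ((n + 1 : ℕ) : ℝ)⁻¹ • (g (n + 1) * μ[e (n + 1) | ℱ n]) := by
          filter_upwards [hpull] with ω hω
          simp only [Pi.smul_apply, hω]
      _ =ᵐ[μ] 0 := by
          filter_upwards [hzero] with ω hω
          simp [hω]
  -- the martingale
  have hMadp : StronglyAdapted F M := by
    intro n
    refine Finset.stronglyMeasurable_fun_sum _ fun i hi => ?_
    rw [Finset.mem_Icc] at hi
    exact (hdmeas i hi.1).mono (hmono hi.2)
  have hMint : ∀ n, Integrable (M n) μ := fun n =>
    integrable_finset_sum _ fun i hi => hdint i (Finset.mem_Icc.1 hi).1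
  have hML2 : ∀ n, MemLp (M n) 2 μ := fun n =>
    memLp_finset_sum (Finset.Icc 1 n) fun i hi => hdL2 i (Finset.mem_Icc.1 hi).1
  have hMsucc : ∀ n, M (n + 1) = M n + d (n + 1) := by
    intro n
    ext ω
    simp only [hM, Pi.add_apply]
    rw [Finset.sum_Icc_succ_top (by omega : 1 ≤ n + 1)]
  have hMart : Martingale M F μ := by
    refine martingale_nat hMadp hMint fun n => ?_
    have : μ[M (n + 1) | ℱ n] =ᵐ[μ] M n := by
      rw [hMsucc n]
      calc μ[M n + d (n + 1) | ℱ n]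
          =ᵐ[μ] μ[M n | ℱ n] + μ[d (n + 1) | ℱ n] := condExp_add (hMint n) (hdint (n + 1) (by omega)) _
        _ =ᵐ[μ] M n + 0 := by
            refine EventuallyEq.add ?_ (hcd n)
            rw [condExp_of_stronglyMeasurable (hle n) (hMadp n) (hMint n)]
        _ =ᵐ[μ] M n := by rw [add_zero]
    exact this.symm
  -- orthogonality of increments against the past
  have hMd0 : ∀ n, ∫ ω, M n ω * d (n + 1) ω ∂μ = 0 := by
    intro n
    have hint : Integrable (M n * d (n + 1)) μ :=
      mul_integrable (hML2 n) (hdL2 (n + 1) (by omega))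
    have hz : μ[M n * d (n + 1) | ℱ n] =ᵐ[μ] 0 := by
      refine (condExp_mul_of_stronglyMeasurable_left (hMadp n) hint (hdint (n + 1) (by omega))).trans ?_
      filter_upwards [hcd n] with ω hω
      show M n ω * μ[d (n + 1) | ℱ n] ω = 0
      rw [hω]; simp
    calc ∫ ω, M n ω * d (n + 1) ω ∂μ
        = ∫ ω, (μ[M n * d (n + 1) | ℱ n]) ω ∂μ := (integral_condExp (hle n)).symm
      _ = ∫ ω, (0 : Ω → ℝ) ω ∂μ := integral_congr_ae hz
      _ = 0 := by simp
  -- second moment of the increments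
  have hdvar : ∀ n : ℕ, ∫ ω, (d (n + 1) ω) ^ 2 ∂μ ≤ (K:ℝ) ^ 3 * (((n + 1 : ℕ) : ℝ)⁻¹) ^ 2 := by
    intro n
    have hg1 : StronglyMeasurable[ℱ n] (g (n + 1)) := by
      simpa using hgmeas (n + 1) (by omega)
    have hg2meas : StronglyMeasurable[ℱ n] (fun ω => g (n + 1) ω ^ 2) := by
      exact hg1.pow 2
    have he2int : Integrable (fun ω => e (n + 1) ω ^ 2) μ := (hL2 (n + 1) (by omega)).integrable_sq
    have hg2bdd : ∀ ω, ‖g (n + 1) ω ^ 2‖ ≤ (K:ℝ) ^ 2 := by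
      intro ω
      rw [Real.norm_eq_abs, abs_of_nonneg (sq_nonneg _), ← sq_abs]
      exact pow_le_pow_left₀ (abs_nonneg _) (hgbdd (n + 1) (by omega) ω) 2
    have hprodint : Integrable (fun ω => g (n + 1) ω ^ 2 * e (n + 1) ω ^ 2) μ :=
      he2int.bdd_mul ((hg2meas.mono (hle n)).aestronglyMeasurable)
        (Filter.Eventually.of_forall hg2bdd)
    have hpull2 : μ[(fun ω => g (n + 1) ω ^ 2 * e (n + 1) ω ^ 2) | ℱ n]
        =ᵐ[μ] fun ω => g (n + 1) ω ^ 2 * V n ω :=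
      condExp_mul_of_stronglyMeasurable_left hg2meas hprodint he2int
    have hVnonneg : 0 ≤ᵐ[μ] V n :=
      condExp_nonneg (Filter.Eventually.of_forall fun ω => sq_nonneg (e (n + 1) ω))
    have hptwise : ∀ᵐ ω ∂μ, g (n + 1) ω ^ 2 * V n ω ≤ (K:ℝ) ^ 3 := by
      filter_upwards [hVnonneg] with ω hV0
      by_cases hmem : ω ∈ S (n + 1)
      · have h1 : g (n + 1) ω ^ 2 ≤ (K:ℝ) ^ 2 := by
          rw [← sq_abs]
          exact pow_le_pow_left₀ (abs_nonneg _) (hgbdd (n + 1) (by omega) ω) 2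
        have h2 : V n ω ≤ (K:ℝ) := hmem.2 n (by omega)
        calc g (n + 1) ω ^ 2 * V n ω ≤ (K:ℝ) ^ 2 * V n ω :=
              mul_le_mul_of_nonneg_right h1 hV0
          _ ≤ (K:ℝ) ^ 2 * (K:ℝ) := mul_le_mul_of_nonneg_left h2 (by positivity)
          _ = (K:ℝ) ^ 3 := by ring
      · have hg0 : g (n + 1) ω = 0 := by
          simp [hg, hξ, Set.indicator_of_notMem hmem]
        rw [hg0]
        simp only [ne_eq, OfNat.ofNat_ne_zero, not_false_eq_true, zero_pow, zero_mul]
        positivity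
    have hcondbd : ∀ᵐ ω ∂μ, (μ[(fun ω => g (n + 1) ω ^ 2 * e (n + 1) ω ^ 2) | ℱ n]) ω ≤ (K:ℝ) ^ 3 := by
      filter_upwards [hpull2, hptwise] with ω h1 h2
      rw [h1]; exact h2
    have hint_le : ∫ ω, g (n + 1) ω ^ 2 * e (n + 1) ω ^ 2 ∂μ ≤ (K:ℝ) ^ 3 := by
      rw [← integral_condExp (hle n) (f := fun ω => g (n + 1) ω ^ 2 * e (n + 1) ω ^ 2)]
      calc ∫ ω, (μ[(fun ω => g (n + 1) ω ^ 2 * e (n + 1) ω ^ 2) | ℱ n]) ω ∂μ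
          ≤ ∫ _ω, (K:ℝ) ^ 3 ∂μ := integral_mono_ae integrable_condExp (integrable_const _) hcondbd
        _ = (K:ℝ) ^ 3 := by simp
    have hdsq : ∀ ω, (d (n + 1) ω) ^ 2
        = (((n + 1 : ℕ) : ℝ)⁻¹) ^ 2 * (g (n + 1) ω ^ 2 * e (n + 1) ω ^ 2) := by
      intro ω; simp only [hd]; ring
    calc ∫ ω, (d (n + 1) ω) ^ 2 ∂μ
        = (((n + 1 : ℕ) : ℝ)⁻¹) ^ 2 * ∫ ω, g (n + 1) ω ^ 2 * e (n + 1) ω ^ 2 ∂μ := by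
          simp_rw [hdsq]; rw [integral_const_mul]
      _ ≤ (((n + 1 : ℕ) : ℝ)⁻¹) ^ 2 * ((K:ℝ) ^ 3) :=
          mul_le_mul_of_nonneg_left hint_le (by positivity)
      _ = (K:ℝ) ^ 3 * (((n + 1 : ℕ) : ℝ)⁻¹) ^ 2 := by ring
  -- second moment of the martingale is uniformly bounded
  have hvar : ∀ n, ∫ ω, (M n ω) ^ 2 ∂μ ≤ (K:ℝ) ^ 3 * ∑ i ∈ Finset.Icc 1 n, ((i:ℝ)⁻¹) ^ 2 := by
    intro n
    induction n with
    | zero => simp [hM]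
    | succ n ih =>
        have hexp : ∀ ω, (M (n + 1) ω) ^ 2
            = M n ω ^ 2 + 2 * (M n ω * d (n + 1) ω) + d (n + 1) ω ^ 2 := by
          intro ω; rw [hMsucc n]; simp only [Pi.add_apply]; ring
        have hint1 : Integrable (fun ω => M n ω ^ 2) μ := (hML2 n).integrable_sq
        have hint2 : Integrable (fun ω => M n ω * d (n + 1) ω) μ :=
          mul_integrable (hML2 n) (hdL2 (n + 1) (by omega))
        have hint3 : Integrable (fun ω => d (n + 1) ω ^ 2) μ :=
          (hdL2 (n + 1) (by omega)).integrable_sq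
        calc ∫ ω, (M (n + 1) ω) ^ 2 ∂μ
            = ∫ ω, (M n ω ^ 2 + 2 * (M n ω * d (n + 1) ω) + d (n + 1) ω ^ 2) ∂μ := by
              simp_rw [hexp]
          _ = (∫ ω, (M n ω ^ 2 + 2 * (M n ω * d (n + 1) ω)) ∂μ)
              + ∫ ω, d (n + 1) ω ^ 2 ∂μ :=
              integral_add (hint1.add (hint2.const_mul 2)) hint3
          _ = ((∫ ω, M n ω ^ 2 ∂μ) + ∫ ω, 2 * (M n ω * d (n + 1) ω) ∂μ)
              + ∫ ω, d (n + 1) ω ^ 2 ∂μ := by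
              rw [integral_add hint1 (hint2.const_mul 2)]
          _ = (∫ ω, M n ω ^ 2 ∂μ) + 2 * (∫ ω, M n ω * d (n + 1) ω ∂μ)
              + ∫ ω, d (n + 1) ω ^ 2 ∂μ := by
              rw [integral_const_mul]
          _ = (∫ ω, M n ω ^ 2 ∂μ) + ∫ ω, d (n + 1) ω ^ 2 ∂μ := by rw [hMd0 n]; ring
          _ ≤ (K:ℝ) ^ 3 * (∑ i ∈ Finset.Icc 1 n, ((i:ℝ)⁻¹) ^ 2)
              + (K:ℝ) ^ 3 * (((n + 1 : ℕ) : ℝ)⁻¹) ^ 2 := add_le_add ih (hdvar n)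
          _ = (K:ℝ) ^ 3 * ∑ i ∈ Finset.Icc 1 (n + 1), ((i:ℝ)⁻¹) ^ 2 := by
              rw [Finset.sum_Icc_succ_top (by omega : 1 ≤ n + 1)]; ring
  have hsummable : Summable (fun i : ℕ => ((i:ℝ)⁻¹) ^ 2) := by
    simpa [one_div, inv_pow] using Real.summable_one_div_nat_pow.2 (by norm_num : 1 < 2)
  set B : ℝ := (K:ℝ) ^ 3 * ∑' i : ℕ, ((i:ℝ)⁻¹) ^ 2 with hB
  have htsumnn : 0 ≤ ∑' i : ℕ, ((i:ℝ)⁻¹) ^ 2 := tsum_nonneg fun i => sq_nonneg _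
  have hvarB : ∀ n, ∫ ω, (M n ω) ^ 2 ∂μ ≤ B := fun n => (hvar n).trans
    (mul_le_mul_of_nonneg_left
      (Summable.sum_le_tsum _ (fun i _ => sq_nonneg _) hsummable) (by positivity))
  -- uniform L¹ bound
  have hsnorm : ∀ n, eLpNorm (M n) 1 μ ≤ ENNReal.ofReal (B ^ (1 / 2 : ℝ)) := by
    intro n
    refine (eLpNorm_le_eLpNorm_of_exponent_le (by norm_num : (1:ℝ≥0∞) ≤ 2)
      (hML2 n).aestronglyMeasurable).trans ?_
    rw [(hML2 n).eLpNorm_eq_integral_rpow_norm two_ne_zero ENNReal.ofNat_ne_top]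
    apply ENNReal.ofReal_le_ofReal
    have h2 : (2:ℝ≥0∞).toReal = 2 := by simp
    rw [h2]
    have hin : ∫ a, ‖M n a‖ ^ (2:ℝ) ∂μ = ∫ a, (M n a) ^ 2 ∂μ := by
      refine integral_congr_ae (Filter.Eventually.of_forall fun a => ?_)
      show ‖M n a‖ ^ (2:ℝ) = (M n a) ^ 2
      rw [Real.norm_eq_abs, show (2:ℝ) = ((2:ℕ):ℝ) by norm_num, Real.rpow_natCast, sq_abs]
    rw [hin, show (2:ℝ)⁻¹ = (1/2 : ℝ) by norm_num]
    exact Real.rpow_le_rpow (integral_nonneg fun a => sq_nonneg _) (hvarB n) (by norm_num)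
  have hR : ∀ n, eLpNorm (M n) 1 μ ≤ ((B ^ (1 / 2 : ℝ)).toNNReal : ℝ≥0∞) := by
    intro n
    have := hsnorm n
    rwa [ENNReal.ofReal] at this
  -- a.s. convergence of the truncated series
  have hconv := hMart.submartingale.exists_ae_tendsto_of_bdd hR
  filter_upwards [hconv] with ω hω hcond
  obtain ⟨c, hc⟩ := hω
  refine ⟨c, ?_⟩
  have hmem : ∀ i, ω ∈ S i := fun i => ⟨fun j _ _ => hcond.2 j, fun j _ => hcond.1 j⟩
  have heq : (fun n => M n ω) = fun n => ∑ i ∈ Finset.Icc 1 n, Z i ω * e i ω / i := by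
    funext n
    refine Finset.sum_congr rfl fun i hi => ?_
    simp only [hd, hg, hξ, Set.indicator_of_mem (hmem i), one_mul]
    ring
  rwa [heq] at hc

theorem stmt16 {Ω : Type*} {m : MeasurableSpace Ω} (μ : Measure Ω) [IsProbabilityMeasure μ]
    (ℱ : ℕ → MeasurableSpace Ω) (hmono : Monotone ℱ) (hle : ∀ i, ℱ i ≤ m)
    (e Z : ℕ → Ω → ℝ)
    (hadapt : ∀ i, 1 ≤ i → StronglyMeasurable[ℱ i] (e i))
    (hL2 : ∀ i, 1 ≤ i → MemLp (e i) 2 μ)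
    (hmds : ∀ i, 1 ≤ i → μ[e i | ℱ (i - 1)] =ᵐ[μ] 0)
    (hbdd : ∀ᵐ ω ∂μ, BddAbove (Set.range fun i => (μ[(e (i + 1)) ^ 2 | ℱ i]) ω))
    (hZmeas : ∀ i, 1 ≤ i → StronglyMeasurable[ℱ (i - 1)] (Z i))
    (hZL2 : ∀ i, 1 ≤ i → MemLp (Z i) 2 μ)
    (hZbdd : ∀ᵐ ω ∂μ, BddAbove (Set.range fun i => |Z i ω|)) :
    ∀ᵐ ω ∂μ, Tendsto (fun n : ℕ => (1 / (n : ℝ)) * ∑ i ∈ Finset.Icc 1 n, Z i ω * e i ω)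
      atTop (nhds 0) := by
  have hall : ∀ᵐ ω ∂μ, ∀ K : ℕ,
      ((∀ i, (μ[(e (i + 1)) ^ 2 | ℱ i]) ω ≤ (K:ℝ)) ∧ (∀ i, |Z i ω| ≤ (K:ℝ))) →
      ∃ c, Tendsto (fun n : ℕ => ∑ i ∈ Finset.Icc 1 n, Z i ω * e i ω / i) atTop (𝓝 c) :=
    ae_all_iff.2 fun K => key μ ℱ hmono hle e Z hadapt hL2 hmds hZmeas K
  filter_upwards [hbdd, hZbdd, hall] with ω h1 h2 h3
  obtain ⟨b1, hb1⟩ := h1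
  obtain ⟨b2, hb2⟩ := h2
  obtain ⟨K, hK⟩ := exists_nat_ge (max b1 b2)
  have hc1 : ∀ i, (μ[(e (i + 1)) ^ 2 | ℱ i]) ω ≤ (K:ℝ) := fun i =>
    le_trans (hb1 ⟨i, rfl⟩) (le_trans (le_max_left _ _) hK)
  have hc2 : ∀ i, |Z i ω| ≤ (K:ℝ) := fun i =>
    le_trans (hb2 ⟨i, rfl⟩) (le_trans (le_max_right _ _) hK)
  obtain ⟨c, hc⟩ := h3 K ⟨hc1, hc2⟩
  exact kronecker (fun i => Z i ω * e i ω) c hc
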